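/- Let r(α) := ln(1/2 - α)/(-α) for α ∈ (0, 1/2). Then there is a unique α* ∈ (0, 1/2) such that r is strictly decreasing on (0, α*) and strictly increasing on (α*, 1/2); in particular α* is the unique minimizer of r on (0, 1/2). -/

import Mathlib

open Real Set

noncomputable def fR (α : ℝ) : ℝ := Real.log (1 / 2 - α) / (-α)
noncomputable def gR (α : ℝ) : ℝ := α / (1 / 2 - α) + Real.log (1 / 2 - α)

lemma log_deriv_aux {α : ℝ} (h : α < 1 / 2) :
    HasDerivAt (fun x : ℝ => Real.log (1 / 2 - x)) (-1 / (1 / 2 - α)) α := by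
  have hne : (1 / 2 - α) ≠ 0 := by linarith
  have h1 : HasDerivAt (fun x : ℝ => 1 / 2 - x) (-1) α := by
    simpa using (hasDerivAt_id α).const_sub (1 / 2 : ℝ)
  have := (Real.hasDerivAt_log hne).comp α h1
  refine this.congr_deriv (Eq.symm ?_)
  field_simp

lemma gR_hasDeriv {α : ℝ} (h : α < 1 / 2) :
    HasDerivAt gR (α / (1 / 2 - α) ^ 2) α := by
  have hne : (1 / 2 - α) ≠ 0 := by linarith
  have h1 : HasDerivAt (fun x : ℝ => 1 / 2 - x) (-1) α := by
    simpa using (hasDerivAt_id α).const_sub (1 / 2 : ℝ)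
  have h3 : HasDerivAt (fun x : ℝ => x / (1 / 2 - x))
      ((1 * (1 / 2 - α) - α * (-1)) / (1 / 2 - α) ^ 2) α :=
    (hasDerivAt_id α).div h1 hne
  have := h3.add (log_deriv_aux h)
  refine this.congr_deriv (Eq.symm ?_)
  have hp : ((1 / 2 - α) ^ 2) ≠ 0 := pow_ne_zero 2 hne
  rw [div_add_div _ _ hp hne, div_eq_div_iff hp (mul_ne_zero hp hne)]
  ring

lemma fR_hasDeriv {α : ℝ} (h0 : α ≠ 0) (h : α < 1 / 2) :
    HasDerivAt fR (gR α / α ^ 2) α := by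
  have hne : (1 / 2 - α) ≠ 0 := by linarith
  have h3 : HasDerivAt (fun x : ℝ => -x) (-1) α := (hasDerivAt_id α).neg
  have := (log_deriv_aux h).div h3 (neg_ne_zero.mpr h0)
  refine this.congr_deriv (Eq.symm ?_)
  unfold gR
  field_simp [hne]
  ring

lemma gR_strictMono : StrictMonoOn gR (Ico (0 : ℝ) (1 / 2)) := by
  apply strictMonoOn_of_deriv_pos (convex_Ico _ _)
  · intro x hx
    exact ((gR_hasDeriv hx.2).continuousAt).continuousWithinAt
  · intro x hx
    rw [interior_Ico] at hx
    rw [(gR_hasDeriv hx.2).deriv]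
    have h1 : (0:ℝ) < (1 / 2 - x) ^ 2 := by
      have : (1 / 2 - x) ≠ 0 := by linarith [hx.2]
      positivity
    exact div_pos hx.1 h1

lemma gR_zero : gR 0 < 0 := by
  unfold gR
  norm_num
  exact Real.log_neg (by norm_num) (by norm_num)

lemma gR_pos_pt : 0 < gR (2 / 5) := by
  unfold gR
  have h10 : Real.log 10 < 4 := by
    have h4 : Real.exp 4 = (Real.exp 1) ^ 4 := by
      rw [← Real.exp_nat_mul]; norm_num
    have hlt : (10:ℝ) < Real.exp 4 := by
      have h1 : (2.7:ℝ) < Real.exp 1 := by linarith [Real.exp_one_gt_d9]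
      have h2 : (2.7:ℝ) ^ 4 < Real.exp 1 ^ 4 :=
        pow_lt_pow_left₀ h1 (by norm_num) (by norm_num)
      rw [h4]
      nlinarith
    calc Real.log 10 < Real.log (Real.exp 4) := Real.log_lt_log (by norm_num) hlt
      _ = 4 := Real.log_exp 4
  have h15 : (1:ℝ)/2 - 2/5 = 1/10 := by norm_num
  rw [h15]
  have h16 : (2:ℝ)/5 / (1/10) = 4 := by norm_num
  rw [h16, show (1:ℝ)/10 = 10⁻¹ by norm_num, Real.log_inv]
  linarith

theorem stmt_10 :
    ∃! αstar : ℝ, αstar ∈ Set.Ioo (0 : ℝ) (1 / 2) ∧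
      StrictAntiOn (fun α : ℝ => Real.log (1 / 2 - α) / (-α)) (Set.Ioc (0 : ℝ) αstar) ∧
      StrictMonoOn (fun α : ℝ => Real.log (1 / 2 - α) / (-α)) (Set.Ico αstar (1 / 2)) ∧
      ∀ α ∈ Set.Ioo (0 : ℝ) (1 / 2), α ≠ αstar →
        Real.log (1 / 2 - αstar) / (-αstar) < Real.log (1 / 2 - α) / (-α) := by
  -- existence of the zero of gR
  have hcont : ContinuousOn gR (Icc (0:ℝ) (2/5)) := by
    intro x hx
    have hx2 : x < 1/2 := lt_of_le_of_lt hx.2 (by norm_num)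
    exact ((gR_hasDeriv hx2).continuousAt).continuousWithinAt
  have hsub : Ioo (gR 0) (gR (2/5)) ⊆ gR '' (Ioo (0:ℝ) (2/5)) :=
    intermediate_value_Ioo (by norm_num) hcont
  obtain ⟨a, haI, hga⟩ := hsub ⟨gR_zero, gR_pos_pt⟩
  have ha1 : a ∈ Ioo (0:ℝ) (1/2) := ⟨haI.1, lt_of_lt_of_le haI.2 (by norm_num)⟩
  -- sign of gR on either side of a
  have hneg : ∀ x ∈ Ioo (0:ℝ) a, gR x < 0 := by
    intro x hx
    have := gR_strictMono ⟨le_of_lt hx.1, lt_trans hx.2 ha1.2⟩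
      ⟨le_of_lt ha1.1, ha1.2⟩ hx.2
    linarith [hga]
  have hpos : ∀ x ∈ Ioo a (1/2 : ℝ), 0 < gR x := by
    intro x hx
    have := gR_strictMono ⟨le_of_lt ha1.1, ha1.2⟩
      ⟨le_of_lt (lt_trans ha1.1 hx.1), hx.2⟩ hx.1
    linarith [hga]
  have hanti : StrictAntiOn fR (Ioc (0:ℝ) a) := by
    apply strictAntiOn_of_deriv_neg (convex_Ioc _ _)
    · intro x hx
      have hx0 : x ≠ 0 := ne_of_gt hx.1
      have hx2 : x < 1/2 := lt_of_le_of_lt hx.2 ha1.2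
      exact ((fR_hasDeriv hx0 hx2).continuousAt).continuousWithinAt
    · intro x hx
      rw [interior_Ioc] at hx
      have hx0 : x ≠ 0 := ne_of_gt hx.1
      have hx2 : x < 1/2 := lt_trans hx.2 ha1.2
      rw [(fR_hasDeriv hx0 hx2).deriv]
      exact div_neg_of_neg_of_pos (hneg x hx) (by positivity)
  have hmono : StrictMonoOn fR (Ico a (1/2 : ℝ)) := by
    apply strictMonoOn_of_deriv_pos (convex_Ico _ _)
    · intro x hx
      have hx0 : x ≠ 0 := ne_of_gt (lt_of_lt_of_le ha1.1 hx.1)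
      exact ((fR_hasDeriv hx0 hx.2).continuousAt).continuousWithinAt
    · intro x hx
      rw [interior_Ico] at hx
      have hx0 : x ≠ 0 := ne_of_gt (lt_trans ha1.1 hx.1)
      rw [(fR_hasDeriv hx0 hx.2).deriv]
      exact div_pos (hpos x hx) (by positivity)
  have hmin : ∀ α ∈ Ioo (0:ℝ) (1/2), α ≠ a → fR a < fR α := by
    intro α hα hne
    rcases lt_or_gt_of_ne hne with h | h
    · exact hanti ⟨hα.1, le_of_lt h⟩ ⟨ha1.1, le_refl a⟩ h
    · exact hmono ⟨le_refl a, ha1.2⟩ ⟨le_of_lt h, hα.2⟩ h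
  refine ⟨a, ⟨ha1, hanti, hmono, hmin⟩, ?_⟩
  rintro b ⟨hb, -, -, hbmin⟩
  by_contra hne
  have h1 : fR b < fR a := hbmin a ha1 (fun h => hne h.symm)
  have h2 : fR a < fR b := hmin b hb hne
  linarith
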